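/- Every finite lattice L can be uniquely recovered from its subposet of irreducibles: if L and L' are finite lattices whose subposets Irr(L) and Irr(L') of join-irreducible or meet-irreducible elements are isomorphic as posets, via an isomorphism extending to a map respecting joins and meets appropriately, then L ≅ L'. More precisely: a finite lattice L is determined up to isomorphism by the poset Irr(L) = {x ∈ L : x is join-irreducible or meet-irreducible}. -/

import Mathlib

/-- `x` is join-irreducible: not the bottom element, and not a join of two other
elements. -/
def JoinIrred {L : Type*} [Lattice L] [BoundedOrder L] (x : L) : Prop :=
  x ≠ ⊥ ∧ ∀ a b : L, x = a ⊔ b → x = a ∨ x = b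

/-- `x` is meet-irreducible: not the top element, and not a meet of two other
elements. -/
def MeetIrred {L : Type*} [Lattice L] [BoundedOrder L] (x : L) : Prop :=
  x ≠ ⊤ ∧ ∀ a b : L, x = a ⊓ b → x = a ∨ x = b

lemma le_of_joinIrred_le {L : Type*} [Lattice L] [BoundedOrder L] [Fintype L]
    {x y : L} (h : ∀ j : L, JoinIrred j → j ≤ x → j ≤ y) : x ≤ y := by
  classical
  by_contra hxy
  obtain ⟨z, hz, hmin⟩ : ∃ z ∈ Finset.univ.filter fun z : L => z ≤ x ∧ ¬ z ≤ y,
      ∀ w ∈ Finset.univ.filter fun z : L => z ≤ x ∧ ¬ z ≤ y, ¬ w < z := by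
    obtain ⟨z, hz⟩ := Finset.exists_minimal
      (s := Finset.univ.filter fun z : L => z ≤ x ∧ ¬ z ≤ y) ⟨x, by simp [hxy]⟩
    exact ⟨z, hz.1, fun w hw hlt => not_le_of_gt hlt (hz.2 hw (le_of_lt hlt))⟩
  simp only [Finset.mem_filter, Finset.mem_univ, true_and] at hz hmin
  obtain ⟨hzx, hzy⟩ := hz
  have hji : JoinIrred z := by
    constructor
    · rintro rfl; exact hzy bot_le
    · intro a b hab
      by_contra hc
      push_neg at hc
      obtain ⟨ha, hb⟩ := hc
      have haz : a < z := lt_of_le_of_ne (by rw [hab]; exact le_sup_left) (fun h => ha h.symm)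
      have hbz : b < z := lt_of_le_of_ne (by rw [hab]; exact le_sup_right) (fun h => hb h.symm)
      have hay : a ≤ y := by
        by_contra hay
        exact hmin a ⟨le_trans haz.le hzx, hay⟩ haz
      have hby : b ≤ y := by
        by_contra hby
        exact hmin b ⟨le_trans hbz.le hzx, hby⟩ hbz
      exact hzy (by rw [hab]; exact sup_le hay hby)
  exact hzy (h z hji hzx)

lemma le_of_le_meetIrred {L : Type*} [Lattice L] [BoundedOrder L] [Fintype L]
    {x y : L} (h : ∀ m : L, MeetIrred m → y ≤ m → x ≤ m) : x ≤ y := by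
  classical
  by_contra hxy
  obtain ⟨z, hz, hmax⟩ : ∃ z ∈ Finset.univ.filter fun z : L => y ≤ z ∧ ¬ x ≤ z,
      ∀ w ∈ Finset.univ.filter fun z : L => y ≤ z ∧ ¬ x ≤ z, ¬ z < w := by
    obtain ⟨z, hz⟩ := Finset.exists_maximal
      (s := Finset.univ.filter fun z : L => y ≤ z ∧ ¬ x ≤ z) ⟨y, by simp [hxy]⟩
    exact ⟨z, hz.1, fun w hw hlt => not_le_of_gt hlt (hz.2 hw (le_of_lt hlt))⟩
  simp only [Finset.mem_filter, Finset.mem_univ, true_and] at hz hmax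
  obtain ⟨hzy, hzx⟩ := hz
  have hmi : MeetIrred z := by
    constructor
    · rintro rfl; exact hzx le_top
    · intro a b hab
      by_contra hc
      push_neg at hc
      obtain ⟨ha, hb⟩ := hc
      have haz : z < a := lt_of_le_of_ne (by rw [hab]; exact inf_le_left) ha
      have hbz : z < b := lt_of_le_of_ne (by rw [hab]; exact inf_le_right) hb
      have hay : x ≤ a := by
        by_contra hay
        exact hmax a ⟨le_trans hzy haz.le, hay⟩ haz
      have hby : x ≤ b := by
        by_contra hby
        exact hmax b ⟨le_trans hzy hbz.le, hby⟩ hbz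
      exact hzx (by rw [hab]; exact le_inf hay hby)
  exact hzx (h z hmi hzy)

/-- A finite lattice is determined up to isomorphism by its subposet of irreducible
(join-irreducible or meet-irreducible) elements (Stanley, EC1, Exercise 3.27). -/
theorem lattice_determined_by_irreducibles
    {L L' : Type*} [Lattice L] [Lattice L'] [Fintype L] [Fintype L']
    [BoundedOrder L] [BoundedOrder L']
    (e : {x : L // JoinIrred x ∨ MeetIrred x} ≃o
         {x : L' // JoinIrred x ∨ MeetIrred x}) :
    Nonempty (L ≃o L') := by
  classical
  set Irr1 := {x : L // JoinIrred x ∨ MeetIrred x}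
  set Irr2 := {x : L' // JoinIrred x ∨ MeetIrred x}
  let φ : L → L' := fun x =>
    (Finset.univ.filter fun i : Irr1 => i.val ≤ x).sup fun i => (e i).val
  let ψ : L' → L := fun y =>
    (Finset.univ.filter fun i : Irr2 => i.val ≤ y).sup fun i => (e.symm i).val
  -- Key Galois-type characterization
  have key : ∀ (x : L) (m : Irr2), φ x ≤ m.val ↔ x ≤ (e.symm m).val := by
    intro x m
    constructor
    · intro h
      apply le_of_joinIrred_le
      intro j hj hjx
      have hmem : (⟨j, Or.inl hj⟩ : Irr1) ∈
          Finset.univ.filter fun i : Irr1 => i.val ≤ x := by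
        simp [hjx]
      have h0 : (e ⟨j, Or.inl hj⟩).val ≤ φ x :=
        Finset.le_sup (f := fun i : Irr1 => (e i).val) hmem
      have h2 : e ⟨j, Or.inl hj⟩ ≤ m := Subtype.coe_le_coe.mp (le_trans h0 h)
      have h3 : (⟨j, Or.inl hj⟩ : Irr1) ≤ e.symm m := by
        rw [← e.le_iff_le, e.apply_symm_apply]; exact h2
      exact Subtype.coe_le_coe.mpr h3
    · intro h
      apply Finset.sup_le
      intro i hi
      have hix : i.val ≤ x := by simpa using hi
      have h1 : i ≤ e.symm m := Subtype.coe_le_coe.mp (le_trans hix h)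
      have h2 : e i ≤ m := by
        rw [← e.apply_symm_apply m]
        exact e.monotone h1
      exact Subtype.coe_le_coe.mpr h2
  have key' : ∀ (y : L') (m : Irr1), ψ y ≤ m.val ↔ y ≤ (e m).val := by
    intro y m
    constructor
    · intro h
      apply le_of_joinIrred_le
      intro j hj hjy
      have hmem : (⟨j, Or.inl hj⟩ : Irr2) ∈
          Finset.univ.filter fun i : Irr2 => i.val ≤ y := by
        simp [hjy]
      have h0 : (e.symm ⟨j, Or.inl hj⟩).val ≤ ψ y :=
        Finset.le_sup (f := fun i : Irr2 => (e.symm i).val) hmem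
      have h2 : e.symm ⟨j, Or.inl hj⟩ ≤ m := Subtype.coe_le_coe.mp (le_trans h0 h)
      have h3 : (⟨j, Or.inl hj⟩ : Irr2) ≤ e m := by
        rw [← e.symm.le_iff_le, e.symm_apply_apply]; exact h2
      exact Subtype.coe_le_coe.mpr h3
    · intro h
      apply Finset.sup_le
      intro i hi
      have hiy : i.val ≤ y := by simpa using hi
      have h1 : i ≤ e m := Subtype.coe_le_coe.mp (le_trans hiy h)
      have h2 : e.symm i ≤ m := by
        rw [← e.symm_apply_apply m]
        exact e.symm.monotone h1
      exact Subtype.coe_le_coe.mpr h2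
  have li : ∀ x : L, ψ (φ x) = x := by
    intro x
    have hiff : ∀ m : Irr1, ψ (φ x) ≤ m.val ↔ x ≤ m.val := by
      intro m
      rw [key' (φ x) m, key x (e m), e.symm_apply_apply]
    apply le_antisymm
    · apply le_of_le_meetIrred
      intro m hm hxm
      exact (hiff ⟨m, Or.inr hm⟩).mpr hxm
    · apply le_of_le_meetIrred
      intro m hm hxm
      exact (hiff ⟨m, Or.inr hm⟩).mp hxm
  have ri : ∀ y : L', φ (ψ y) = y := by
    intro y
    have hiff : ∀ m : Irr2, φ (ψ y) ≤ m.val ↔ y ≤ m.val := by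
      intro m
      rw [key (ψ y) m, key' y (e.symm m), e.apply_symm_apply]
    apply le_antisymm
    · apply le_of_le_meetIrred
      intro m hm hxm
      exact (hiff ⟨m, Or.inr hm⟩).mpr hxm
    · apply le_of_le_meetIrred
      intro m hm hxm
      exact (hiff ⟨m, Or.inr hm⟩).mp hxm
  have φmono : Monotone φ := by
    intro a b hab
    apply Finset.sup_le
    intro i hi
    have hia : i.val ≤ a := by simpa using hi
    have hmem : i ∈ Finset.univ.filter fun i : Irr1 => i.val ≤ b := by
      simp only [Finset.mem_filter, Finset.mem_univ, true_and]
      exact le_trans hia hab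
    exact Finset.le_sup (f := fun i : Irr1 => (e i).val) hmem
  have ψmono : Monotone ψ := by
    intro a b hab
    apply Finset.sup_le
    intro i hi
    have hia : i.val ≤ a := by simpa using hi
    have hmem : i ∈ Finset.univ.filter fun i : Irr2 => i.val ≤ b := by
      simp only [Finset.mem_filter, Finset.mem_univ, true_and]
      exact le_trans hia hab
    exact Finset.le_sup (f := fun i : Irr2 => (e.symm i).val) hmem
  refine ⟨⟨⟨φ, ψ, li, ri⟩, ?_⟩⟩
  intro a b
  show φ a ≤ φ b ↔ a ≤ b
  constructor
  · intro h
    have := ψmono h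
    rwa [li, li] at this
  · exact fun h => φmono h
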